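/- Let H̃ be a symmetric d×d block matrix with blocks H_xx (of size n×n), H_xy, and H_yy (of size m×m), such that H_xx ⪰ μI and H_yy ⪯ −μI for some μ > 0, and ‖H̃‖ ≤ L (spectral norm). Then the squared matrix H = H̃² satisfies μ²I ⪯ H ⪯ L²I. -/

import Mathlib

open Matrix

/-- Spectral (operator) norm of a real square matrix. -/
noncomputable def matSpectralNorm {d : Type*} [Fintype d] [DecidableEq d]
    (A : Matrix d d ℝ) : ℝ :=
  ‖Matrix.toEuclideanCLM (𝕜 := ℝ) A‖

/-- Quadratic lower bound from `A - μ • 1 ⪰ 0`. -/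
lemma quad_lower {k : ℕ} {A : Matrix (Fin k) (Fin k) ℝ} {μ : ℝ}
    (h : (A - μ • (1 : Matrix (Fin k) (Fin k) ℝ)).PosSemidef) (x : Fin k → ℝ) :
    μ * (x ⬝ᵥ x) ≤ x ⬝ᵥ (A *ᵥ x) := by
  have h2 := h.dotProduct_mulVec_nonneg x
  simp only [star_trivial, sub_mulVec, smul_mulVec, one_mulVec,
    dotProduct_sub, dotProduct_smul, smul_eq_mul] at h2
  linarith

lemma dp_self_nonneg {ι : Type*} [Fintype ι] (w : ι → ℝ) : 0 ≤ w ⬝ᵥ w :=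
  Finset.sum_nonneg fun i _ => mul_self_nonneg _

lemma norm_sq_withLp {ι : Type*} [Fintype ι] (w : ι → ℝ) :
    ‖((WithLp.equiv 2 (ι → ℝ)).symm w : EuclideanSpace ℝ ι)‖ ^ 2 = w ⬝ᵥ w := by
  rw [EuclideanSpace.norm_eq, Real.sq_sqrt (by positivity)]
  simp [dotProduct, sq, Real.norm_eq_abs, abs_mul_abs_self]

/-- if the symmetric block matrix H̃ = [[Hxx, Hxy],[Hxyᵀ, Hyy]] satisfies
Hxx ⪰ μI, Hyy ⪯ −μI and ‖H̃‖ ≤ L with 0 < μ ≤ L, then μ²I ⪯ H̃² ⪯ L²I. -/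
theorem squared_hessian_bounds {n m : ℕ} (μ L : ℝ) (hμ : 0 < μ) (hμL : μ ≤ L)
    (Hxx : Matrix (Fin n) (Fin n) ℝ) (Hxy : Matrix (Fin n) (Fin m) ℝ)
    (Hyy : Matrix (Fin m) (Fin m) ℝ)
    (hxx : Hxx.IsSymm) (hyy : Hyy.IsSymm)
    (hxxμ : (Hxx - μ • (1 : Matrix (Fin n) (Fin n) ℝ)).PosSemidef)
    (hyyμ : (-Hyy - μ • (1 : Matrix (Fin m) (Fin m) ℝ)).PosSemidef)
    (hnorm : matSpectralNorm (Matrix.fromBlocks Hxx Hxy Hxyᵀ Hyy) ≤ L) :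
    ((Matrix.fromBlocks Hxx Hxy Hxyᵀ Hyy) ^ 2
        - μ ^ 2 • (1 : Matrix (Fin n ⊕ Fin m) (Fin n ⊕ Fin m) ℝ)).PosSemidef ∧
    (L ^ 2 • (1 : Matrix (Fin n ⊕ Fin m) (Fin n ⊕ Fin m) ℝ)
        - (Matrix.fromBlocks Hxx Hxy Hxyᵀ Hyy) ^ 2).PosSemidef := by
  set H : Matrix (Fin n ⊕ Fin m) (Fin n ⊕ Fin m) ℝ := Matrix.fromBlocks Hxx Hxy Hxyᵀ Hyy with hH
  have hHsymm : Hᵀ = H := by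
    rw [hH, fromBlocks_transpose, transpose_transpose, hxx.eq, hyy.eq]
  have hHherm : H.IsHermitian := hHsymm
  have hL : 0 < L := lt_of_lt_of_le hμ hμL
  -- quadratic form of H^2
  have hquad : ∀ v : Fin n ⊕ Fin m → ℝ,
      v ⬝ᵥ ((H ^ 2) *ᵥ v) = (H *ᵥ v) ⬝ᵥ (H *ᵥ v) := by
    intro v
    rw [pow_two, ← mulVec_mulVec, dotProduct_mulVec, ← mulVec_transpose, hHsymm]
  -- norm bound:  (H v) ⬝ᵥ (H v) ≤ L^2 * (v ⬝ᵥ v)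
  have hub : ∀ v : Fin n ⊕ Fin m → ℝ, (H *ᵥ v) ⬝ᵥ (H *ᵥ v) ≤ L ^ 2 * (v ⬝ᵥ v) := by
    intro v
    have e1 : Matrix.toEuclideanCLM (𝕜 := ℝ) H ((WithLp.equiv 2 _).symm v)
        = (WithLp.equiv 2 _).symm (H *ᵥ v) := by
      rfl
    have h2 := (Matrix.toEuclideanCLM (𝕜 := ℝ) H).le_opNorm ((WithLp.equiv 2 _).symm v)
    rw [e1] at h2
    have h3 : ‖((WithLp.equiv 2 _).symm (H *ᵥ v) : EuclideanSpace ℝ (Fin n ⊕ Fin m))‖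
        ≤ L * ‖((WithLp.equiv 2 _).symm v : EuclideanSpace ℝ (Fin n ⊕ Fin m))‖ :=
      h2.trans (by
        have := hnorm
        unfold matSpectralNorm at this
        exact mul_le_mul_of_nonneg_right this (norm_nonneg _))
    have h4 := pow_le_pow_left₀ (norm_nonneg _) h3 2
    rw [mul_pow, norm_sq_withLp, norm_sq_withLp] at h4
    exact h4
  -- key lower bound:  μ * (v ⬝ᵥ v) ≤ (H v) ⬝ᵥ w  with w the sign-flipped vector
  have hlb : ∀ v : Fin n ⊕ Fin m → ℝ, μ ^ 2 * (v ⬝ᵥ v) ≤ (H *ᵥ v) ⬝ᵥ (H *ᵥ v) := by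
    intro v
    set x : Fin n → ℝ := v ∘ Sum.inl
    set y : Fin m → ℝ := v ∘ Sum.inr
    set w : Fin n ⊕ Fin m → ℝ := Sum.elim x (-y) with hw
    set u : Fin n ⊕ Fin m → ℝ := H *ᵥ v with hu
    have hvv : v ⬝ᵥ v = x ⬝ᵥ x + y ⬝ᵥ y := dotProduct_block v v
    have hww : w ⬝ᵥ w = v ⬝ᵥ v := by
      rw [hvv, dotProduct_block]
      simp [hw, dotProduct, mul_comm]
    have huw : μ * (v ⬝ᵥ v) ≤ u ⬝ᵥ w := by
      have hux : u ∘ Sum.inl = Hxx *ᵥ x + Hxy *ᵥ y := by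
        ext i
        simp [hu, hH, mulVec, dotProduct, Fintype.sum_sum_type, fromBlocks, x, y]
      have huy : u ∘ Sum.inr = Hxyᵀ *ᵥ x + Hyy *ᵥ y := by
        ext i
        simp [hu, hH, mulVec, dotProduct, Fintype.sum_sum_type, fromBlocks, x, y]
      have hcross : (Hxy *ᵥ y) ⬝ᵥ x = (Hxyᵀ *ᵥ x) ⬝ᵥ y := by
        rw [dotProduct_comm, dotProduct_mulVec, ← mulVec_transpose, dotProduct_comm]
      have hx := quad_lower hxxμ x
      have hy := quad_lower hyyμ y
      simp only [sub_mulVec, neg_mulVec, smul_mulVec, one_mulVec, dotProduct_sub,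
        dotProduct_neg, dotProduct_smul, smul_eq_mul] at hy
      have expand : u ⬝ᵥ w = x ⬝ᵥ (Hxx *ᵥ x) - y ⬝ᵥ (Hyy *ᵥ y) := by
        rw [dotProduct_block]
        have e1 : w ∘ Sum.inl = x := rfl
        have e2 : w ∘ Sum.inr = -y := rfl
        rw [e1, e2, hux, huy]
        rw [add_dotProduct, add_dotProduct, dotProduct_neg, dotProduct_neg, hcross]
        rw [dotProduct_comm (Hxx *ᵥ x) x, dotProduct_comm (Hyy *ᵥ y) y]
        ring
      rw [expand, hvv]
      have hy' : μ * (y ⬝ᵥ y) ≤ - (y ⬝ᵥ (Hyy *ᵥ y)) := by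
        have := quad_lower hyyμ y
        have hnegy : y ⬝ᵥ ((-Hyy) *ᵥ y) = - (y ⬝ᵥ (Hyy *ᵥ y)) := by
          rw [neg_mulVec, dotProduct_neg]
        linarith
      linarith
    -- Cauchy–Schwarz
    have hcs : (u ⬝ᵥ w) ^ 2 ≤ (u ⬝ᵥ u) * (w ⬝ᵥ w) := by
      simpa [dotProduct, sq] using Finset.sum_mul_sq_le_sq_mul_sq Finset.univ u w
    rw [hww] at hcs
    have hvnn : 0 ≤ v ⬝ᵥ v := dp_self_nonneg v
    rcases eq_or_lt_of_le hvnn with h0 | hpos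
    · have : μ ^ 2 * (v ⬝ᵥ v) = 0 := by rw [← h0]; ring
      rw [this]
      exact dp_self_nonneg u
    · have hsq : (μ * (v ⬝ᵥ v)) ^ 2 ≤ (u ⬝ᵥ u) * (v ⬝ᵥ v) := by
        refine le_trans ?_ hcs
        have h0 : 0 ≤ μ * (v ⬝ᵥ v) := mul_nonneg hμ.le hvnn
        exact pow_le_pow_left₀ h0 huw 2
      have := (mul_le_mul_iff_left₀ hpos).mp (by nlinarith [hsq] : μ ^ 2 * (v ⬝ᵥ v) * (v ⬝ᵥ v) ≤ (u ⬝ᵥ u) * (v ⬝ᵥ v))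
      exact this
  have herm1 : (H ^ 2 - μ ^ 2 • (1 : Matrix (Fin n ⊕ Fin m) (Fin n ⊕ Fin m) ℝ)).IsHermitian := by
    simp [Matrix.IsHermitian, conjTranspose_sub, conjTranspose_smul, conjTranspose_pow,
      hHherm.eq, hHsymm]
  have herm2 : (L ^ 2 • (1 : Matrix (Fin n ⊕ Fin m) (Fin n ⊕ Fin m) ℝ) - H ^ 2).IsHermitian := by
    simp [Matrix.IsHermitian, conjTranspose_sub, conjTranspose_smul, conjTranspose_pow,
      hHherm.eq, hHsymm]
  constructor
  · refine PosSemidef.of_dotProduct_mulVec_nonneg herm1 ?_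
    intro v
    simp only [star_trivial, sub_mulVec, smul_mulVec, one_mulVec, dotProduct_sub,
      dotProduct_smul, smul_eq_mul]
    rw [hquad v]
    linarith [hlb v]
  · refine PosSemidef.of_dotProduct_mulVec_nonneg herm2 ?_
    intro v
    simp only [star_trivial, sub_mulVec, smul_mulVec, one_mulVec, dotProduct_sub,
      dotProduct_smul, smul_eq_mul]
    rw [hquad v]
    linarith [hub v]
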